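/- Every pure tribal Nash equilibrium s of an atomic linear congestion game satisfies C(s) ≤ 4·C(s*) for every strategy profile s*, where C is total cost. -/

import Mathlib

open Finset

/-- Every pure tribal Nash equilibrium of an atomic linear congestion game has
total cost at most 4 times that of any strategy profile: C(s) ≤ 4·C(s*). -/

theorem aux_nat1 (u x : ℕ) : u * (x+1) ≤ x*x + u*u := by
  rcases le_or_gt u x with h | h
  · have h1 : u * x ≤ x * x := Nat.mul_le_mul_right x h
    have h2 : u ≤ u * u := by rcases Nat.eq_zero_or_pos u with h0 | h0
                              · simp [h0]
                              · exact Nat.le_mul_of_pos_left u h0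
    calc u * (x+1) = u*x + u := by ring
    _ ≤ x*x + u*u := Nat.add_le_add h1 h2
  · have : u * (x+1) ≤ u * u := Nat.mul_le_mul_left u h
    omega

theorem aux_nat2 (x y : ℕ) : 3*(x*y) + 3*x ≤ 5*(x*x) + y*y := by
  rcases Nat.lt_or_ge x 2 with h | h
  · interval_cases x
    · omega
    · rcases Nat.lt_or_ge y 3 with hy | hy
      · interval_cases y <;> omega
      · have : 3*y ≤ y*y := Nat.mul_le_mul_right y hy
        omega
  · zify at h ⊢
    nlinarith [sq_nonneg (2*(y:ℤ) - 3*(x:ℤ)), h]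

theorem aux_nat3 {ι : Type*} (I : Finset ι) (f : ι → ℕ) :
    ∑ g ∈ I, f g * f g ≤ (∑ g ∈ I, f g) * (∑ g ∈ I, f g) := by
  calc ∑ g ∈ I, f g * f g ≤ ∑ g ∈ I, f g * (∑ h ∈ I, f h) := by
        apply Finset.sum_le_sum
        intro g hg
        exact Nat.mul_le_mul_left _ (Finset.single_le_sum (fun _ _ => Nat.zero_le _) hg)
  _ = (∑ g ∈ I, f g) * (∑ g ∈ I, f g) := by rw [← Finset.sum_mul]

theorem stmt_16 {P E : Type*} [Fintype P] [Fintype E] [DecidableEq P] [DecidableEq E]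
    (α : E → ℝ) (hα : ∀ e, 0 ≤ α e)
    (τ : P → ℕ)
    -- each player's set of allowed strategies (sets of resources)
    (S : P → Set (Finset E))
    -- congestion counts, player costs, tribal costs, social cost
    (n : E → (P → Finset E) → ℕ)
    (hn : ∀ e t, n e t = (univ.filter (fun j : P => e ∈ t j)).card)
    (c : P → (P → Finset E) → ℝ)
    (hc : ∀ i t, c i t = ∑ e ∈ t i, α e * (n e t : ℝ))
    (cτ : P → (P → Finset E) → ℝ)
    (hcτ : ∀ i t, cτ i t = ∑ j ∈ univ.filter (fun j => τ j = τ i), c j t)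
    (C : (P → Finset E) → ℝ)
    (hC : ∀ t, C t = ∑ i, c i t)
    -- s is a pure tribal Nash equilibrium, s* an arbitrary profile
    (s sstar : P → Finset E)
    (hs : ∀ i, s i ∈ S i) (hsstar : ∀ i, sstar i ∈ S i)
    (hnash : ∀ (i : P) (a : Finset E), a ∈ S i → cτ i s ≤ cτ i (Function.update s i a)) :
    C s ≤ 4 * C sstar := by
  classical
  set d : P → E → ℝ := fun i e =>
    (if e ∈ sstar i then (1:ℝ) else 0) - (if e ∈ s i then (1:ℝ) else 0) with hd
  set U : ℕ → E → ℕ := fun g e =>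
    ∑ j ∈ univ.filter (fun j => τ j = g), (if e ∈ s j then 1 else 0) with hU
  set X : ℕ → E → ℕ := fun g e =>
    ∑ j ∈ univ.filter (fun j => τ j = g), (if e ∈ sstar j then 1 else 0) with hX
  -- counting as a sum of indicators
  have hNsum : ∀ (e : E) (t : P → Finset E),
      (n e t : ℝ) = ∑ j, (if e ∈ t j then (1:ℝ) else 0) := by
    intro e t; rw [hn, Finset.card_filter]; push_cast; rfl
  have hUcast : ∀ (g : ℕ) (e : E),
      (U g e : ℝ) = ∑ j ∈ univ.filter (fun j => τ j = g), (if e ∈ s j then (1:ℝ) else 0) := by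
    intro g e; simp only [hU]; push_cast; rfl
  have hXcast : ∀ (g : ℕ) (e : E),
      (X g e : ℝ) = ∑ j ∈ univ.filter (fun j => τ j = g), (if e ∈ sstar j then (1:ℝ) else 0) := by
    intro g e; simp only [hX]; push_cast; rfl
  have hfibU : ∀ e : E, ∑ g ∈ univ.image τ, U g e = n e s := by
    intro e
    rw [hn, Finset.card_filter]
    simp only [hU]
    exact Finset.sum_fiberwise_of_maps_to (fun x _ => Finset.mem_image_of_mem τ (mem_univ x)) _
  have hfibX : ∀ e : E, ∑ g ∈ univ.image τ, X g e = n e sstar := by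
    intro e
    rw [hn, Finset.card_filter]
    simp only [hX]
    exact Finset.sum_fiberwise_of_maps_to (fun x _ => Finset.mem_image_of_mem τ (mem_univ x)) _
  -- swapping player/resource sums over an arbitrary player set
  have hswap' : ∀ (Q : Finset P) (t : P → Finset E) (g : E → ℝ),
      (∑ j ∈ Q, ∑ e ∈ t j, g e)
        = ∑ e, (∑ j ∈ Q, if e ∈ t j then (1:ℝ) else 0) * g e := by
    intro Q t g
    have h1 : ∀ j : P, ∑ e ∈ t j, g e = ∑ e, (if e ∈ t j then (1:ℝ) else 0) * g e := by
      intro j; simp [ite_mul, Finset.sum_ite_mem]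
    simp only [h1]
    rw [Finset.sum_comm]
    refine Finset.sum_congr rfl (fun e _ => ?_)
    rw [← Finset.sum_mul]
  have hswap : ∀ (t : P → Finset E) (g : E → ℝ),
      (∑ i, ∑ e ∈ t i, g e) = ∑ e, (n e t : ℝ) * g e := by
    intro t g
    rw [hswap' univ t g]
    refine Finset.sum_congr rfl (fun e _ => ?_)
    rw [← hNsum]
  -- social cost as sum of squares
  have hCsq : ∀ t, C t = ∑ e, α e * (n e t : ℝ)^2 := by
    intro t
    rw [hC]
    calc ∑ i, c i t = ∑ i, ∑ e ∈ t i, α e * (n e t : ℝ) :=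
          Finset.sum_congr rfl (fun i _ => hc i t)
    _ = ∑ e, (n e t : ℝ) * (α e * (n e t : ℝ)) := hswap t _
    _ = ∑ e, α e * (n e t : ℝ)^2 := by
          refine Finset.sum_congr rfl (fun e _ => ?_); ring
  -- congestion change under a unilateral deviation
  have hupd : ∀ (e : E) (i : P) (a : Finset E),
      (n e (Function.update s i a) : ℝ)
        = (n e s : ℝ) + (if e ∈ a then (1:ℝ) else 0) - (if e ∈ s i then (1:ℝ) else 0) := by
    intro e i a
    rw [hNsum, hNsum]
    rw [← Finset.add_sum_erase _ _ (mem_univ i), ← Finset.add_sum_erase _ _ (mem_univ i)]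
    have h2 : ∑ j ∈ univ.erase i, (if e ∈ Function.update s i a j then (1:ℝ) else 0)
        = ∑ j ∈ univ.erase i, (if e ∈ s j then (1:ℝ) else 0) := by
      refine Finset.sum_congr rfl (fun j hj => ?_)
      rw [Function.update_of_ne (Finset.ne_of_mem_erase hj)]
    rw [h2, Function.update_self]
    ring
  -- cost change for other players
  have hdev_ne : ∀ (i j : P) (a : Finset E), j ≠ i →
      c j (Function.update s i a)
        = c j s + ∑ e ∈ s j, α e *
            ((if e ∈ a then (1:ℝ) else 0) - (if e ∈ s i then (1:ℝ) else 0)) := by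
    intro i j a hji
    rw [hc, hc, Function.update_of_ne hji, ← Finset.sum_add_distrib]
    refine Finset.sum_congr rfl (fun e _ => ?_)
    rw [hupd]; ring
  -- cost of the deviator after deviating
  have hdev_self : ∀ (i : P) (a : Finset E),
      c i (Function.update s i a) ≤ ∑ e ∈ a, α e * ((n e s : ℝ) + 1) := by
    intro i a
    rw [hc, Function.update_self]
    refine Finset.sum_le_sum (fun e he => ?_)
    rw [hupd, if_pos he]
    have h1 : (0:ℝ) ≤ if e ∈ s i then (1:ℝ) else 0 := by split_ifs <;> norm_num
    have := hα e
    nlinarith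
  -- key per-player inequality from the tribal Nash condition
  have hkey : ∀ i : P, c i s ≤ (∑ e ∈ sstar i, α e * ((n e s : ℝ) + 1))
      + (∑ e ∈ s i, α e)
      + ∑ j ∈ univ.filter (fun j => τ j = τ i), ∑ e ∈ s j, α e * d i e := by
    intro i
    have hdform : ∀ e : E, α e * d i e = α e *
        ((if e ∈ sstar i then (1:ℝ) else 0) - (if e ∈ s i then (1:ℝ) else 0)) := by
      intro e; rw [hd]
    set T := univ.filter (fun j => τ j = τ i) with hT
    set D : P → ℝ := fun j => ∑ e ∈ s j, α e * d i e with hD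
    have hiT : i ∈ T := by simp [hT]
    have hna := hnash i (sstar i) (hsstar i)
    rw [hcτ, hcτ] at hna
    rw [← Finset.add_sum_erase _ _ hiT, ← Finset.add_sum_erase _ _ hiT] at hna
    have herase : ∑ j ∈ T.erase i, c j (Function.update s i (sstar i))
        = ∑ j ∈ T.erase i, (c j s + D j) := by
      refine Finset.sum_congr rfl (fun j hj => ?_)
      rw [hdev_ne i j (sstar i) (Finset.ne_of_mem_erase hj), hD]
    rw [herase, Finset.sum_add_distrib] at hna
    have h1 : c i s ≤ c i (Function.update s i (sstar i)) + ∑ j ∈ T.erase i, D j := by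
      linarith
    have h2 : ∑ j ∈ T.erase i, D j = (∑ j ∈ T, D j) - D i := by
      rw [← Finset.add_sum_erase T D hiT]; ring
    have h3 : - D i ≤ ∑ e ∈ s i, α e := by
      have hDi : - D i = ∑ e ∈ s i, -(α e * d i e) := by
        rw [hD, ← Finset.sum_neg_distrib]
      rw [hDi]
      refine Finset.sum_le_sum (fun e he => ?_)
      simp only [hd]
      rw [if_pos he]
      have h4 : (0:ℝ) ≤ if e ∈ sstar i then (1:ℝ) else 0 := by split_ifs <;> norm_num
      have := hα e
      nlinarith
    have h5 := hdev_self i (sstar i)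
    have h6 : ∑ j ∈ T, ∑ e ∈ s j, α e * d i e = ∑ j ∈ T, D j := by
      refine Finset.sum_congr rfl (fun j _ => ?_); rw [hD]
    rw [h6]
    calc c i s ≤ c i (Function.update s i (sstar i)) + ((∑ j ∈ T, D j) - D i) := by
          rw [← h2]; exact h1
    _ ≤ (∑ e ∈ sstar i, α e * ((n e s : ℝ) + 1)) + (∑ e ∈ s i, α e) + ∑ j ∈ T, D j := by
          linarith
  -- restructure the third term per resource and per tribe
  have h3a : ∀ i : P, (∑ j ∈ univ.filter (fun j => τ j = τ i), ∑ e ∈ s j, α e * d i e)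
      = ∑ e, (U (τ i) e : ℝ) * (α e * d i e) := by
    intro i
    rw [hswap' (univ.filter (fun j => τ j = τ i)) s (fun e => α e * d i e)]
    refine Finset.sum_congr rfl (fun e _ => ?_)
    rw [hUcast]
  have h3c : ∀ e : E, (∑ i, (U (τ i) e : ℝ) * (α e * d i e))
      = α e * ∑ g ∈ univ.image τ, (U g e : ℝ) * ((X g e : ℝ) - (U g e : ℝ)) := by
    intro e
    rw [← Finset.sum_fiberwise_of_maps_to (fun x _ => Finset.mem_image_of_mem τ (mem_univ x))
        (fun i => (U (τ i) e : ℝ) * (α e * d i e))]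
    rw [Finset.mul_sum]
    refine Finset.sum_congr rfl (fun g _ => ?_)
    have hcongr : ∀ i ∈ univ.filter (fun i => τ i = g), (U (τ i) e : ℝ) * (α e * d i e)
        = ((U g e : ℝ) * α e) * d i e := by
      intro i hi
      rw [Finset.mem_filter] at hi
      rw [hi.2]; ring
    rw [Finset.sum_congr rfl hcongr, ← Finset.mul_sum]
    have hdsum : ∑ i ∈ univ.filter (fun i => τ i = g), d i e
        = (X g e : ℝ) - (U g e : ℝ) := by
      simp only [hd]
      rw [Finset.sum_sub_distrib, hXcast, hUcast]
    rw [hdsum]; ring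
  -- main summation
  have hmain : C s ≤ ∑ e, ((n e sstar : ℝ) * (α e * ((n e s : ℝ) + 1)) + (n e s : ℝ) * α e
      + α e * ∑ g ∈ univ.image τ, (U g e : ℝ) * ((X g e : ℝ) - (U g e : ℝ))) := by
    rw [hC]
    have step1 : ∑ i, c i s ≤ ∑ i, ((∑ e ∈ sstar i, α e * ((n e s : ℝ) + 1))
        + (∑ e ∈ s i, α e)
        + ∑ j ∈ univ.filter (fun j => τ j = τ i), ∑ e ∈ s j, α e * d i e) :=
      Finset.sum_le_sum (fun i _ => hkey i)
    rw [Finset.sum_add_distrib, Finset.sum_add_distrib] at step1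
    rw [hswap sstar (fun e => α e * ((n e s : ℝ) + 1))] at step1
    rw [hswap s (fun e => α e)] at step1
    simp only [h3a] at step1
    rw [Finset.sum_comm] at step1
    simp only [h3c] at step1
    rw [← Finset.sum_add_distrib, ← Finset.sum_add_distrib] at step1
    exact step1
  -- per-resource smoothness bound
  have hedge : ∀ e : E, (n e sstar : ℝ) * (α e * ((n e s : ℝ) + 1)) + (n e s : ℝ) * α e
      + α e * ∑ g ∈ univ.image τ, (U g e : ℝ) * ((X g e : ℝ) - (U g e : ℝ))
      ≤ (8/3) * (α e * (n e sstar : ℝ)^2) + (1/3) * (α e * (n e s : ℝ)^2) := by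
    intro e
    have hS1 : (∑ g ∈ univ.image τ, (U g e : ℝ) * ((X g e : ℝ) - (U g e : ℝ)))
        ≤ (n e sstar : ℝ)^2 - (n e s : ℝ) := by
      have hperg : ∀ g ∈ univ.image τ,
          (U g e : ℝ) * ((X g e : ℝ) - (U g e : ℝ)) ≤ (X g e : ℝ)^2 - (U g e : ℝ) := by
        intro g _
        have h' : (U g e : ℝ) * ((X g e : ℝ) + 1)
            ≤ (X g e : ℝ) * (X g e : ℝ) + (U g e : ℝ) * (U g e : ℝ) := by
          exact_mod_cast aux_nat1 (U g e) (X g e)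
        nlinarith
      have hXsq : ∑ g ∈ univ.image τ, (X g e : ℝ)^2 ≤ (n e sstar : ℝ)^2 := by
        have h := aux_nat3 (univ.image τ) (fun g => X g e)
        rw [hfibX e] at h
        calc ∑ g ∈ univ.image τ, (X g e : ℝ)^2
            = ((∑ g ∈ univ.image τ, X g e * X g e : ℕ) : ℝ) := by
              push_cast
              exact Finset.sum_congr rfl (fun g _ => by ring)
        _ ≤ ((n e sstar * n e sstar : ℕ) : ℝ) := by exact_mod_cast h
        _ = (n e sstar : ℝ)^2 := by push_cast; ring
      have hUsum : ∑ g ∈ univ.image τ, (U g e : ℝ) = (n e s : ℝ) := by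
        rw [← hfibU e]; push_cast; rfl
      calc ∑ g ∈ univ.image τ, (U g e : ℝ) * ((X g e : ℝ) - (U g e : ℝ))
          ≤ ∑ g ∈ univ.image τ, ((X g e : ℝ)^2 - (U g e : ℝ)) := Finset.sum_le_sum hperg
      _ = (∑ g ∈ univ.image τ, (X g e : ℝ)^2) - ∑ g ∈ univ.image τ, (U g e : ℝ) :=
            Finset.sum_sub_distrib _ _
      _ ≤ (n e sstar : ℝ)^2 - (n e s : ℝ) := by rw [hUsum]; linarith
    have hq : (3:ℝ) * ((n e sstar : ℝ) * (n e s : ℝ)) + 3 * (n e sstar : ℝ)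
        ≤ 5 * ((n e sstar : ℝ) * (n e sstar : ℝ)) + (n e s : ℝ) * (n e s : ℝ) := by
      exact_mod_cast aux_nat2 (n e sstar) (n e s)
    have hα' := hα e
    have e2 : α e * ((n e sstar : ℝ) * ((n e s : ℝ) + 1) + (n e s : ℝ)
          + ∑ g ∈ univ.image τ, (U g e : ℝ) * ((X g e : ℝ) - (U g e : ℝ)))
        ≤ α e * ((n e sstar : ℝ) * ((n e s : ℝ) + 1) + (n e s : ℝ)
          + ((n e sstar : ℝ)^2 - (n e s : ℝ))) :=
      mul_le_mul_of_nonneg_left (by linarith) hα'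
    have e3 : α e * ((n e sstar : ℝ) * ((n e s : ℝ) + 1) + (n e s : ℝ)
          + ((n e sstar : ℝ)^2 - (n e s : ℝ)))
        ≤ α e * ((8/3) * (n e sstar : ℝ)^2 + (1/3) * (n e s : ℝ)^2) :=
      mul_le_mul_of_nonneg_left (by nlinarith) hα'
    nlinarith [e2, e3]
  -- conclude
  have hfinal : ∑ e, ((n e sstar : ℝ) * (α e * ((n e s : ℝ) + 1)) + (n e s : ℝ) * α e
      + α e * ∑ g ∈ univ.image τ, (U g e : ℝ) * ((X g e : ℝ) - (U g e : ℝ)))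
      ≤ (8/3) * C sstar + (1/3) * C s := by
    rw [hCsq sstar, hCsq s, Finset.mul_sum, Finset.mul_sum, ← Finset.sum_add_distrib]
    exact Finset.sum_le_sum (fun e _ => hedge e)
  linarith
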